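/- Let u_{k} = β g_k + (1−β)(u_{k−1} + g_k − w_k) where β ∈ (0,1), and suppose that conditioned on the past, E[g_k] = ∇J(x_k) and E[g_k − w_k] = ∇J(x_k) − ∇J(x_{k−1}). Define Δ_k = u_k − ∇J(x_k). Then E[Δ_k] = (1−β)·E[Δ_{k−1}], and consequently E[‖Δ_k‖²] ≤ (1−β)²E[‖Δ_{k−1}‖²] + 2β²E[‖g_k − ∇J(x_k)‖²] + 2(1−β)²E[‖g_k − w_k − ∇J(x_k) + ∇J(x_{k−1})‖²]. -/

import Mathlib

open MeasureTheory

section Aux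

variable {Ω : Type*} {m0 : MeasurableSpace Ω} {μ : Measure Ω}
variable {E : Type*} [NormedAddCommGroup E] [InnerProductSpace ℝ E]

lemma aux_integrable_inner {A B : Ω → E} (hA : MemLp A 2 μ) (hB : MemLp B 2 μ) :
    Integrable (fun ω => (inner ℝ (A ω) (B ω) : ℝ)) μ := by
  have h := L2.integrable_inner (𝕜 := ℝ) (hA.toLp A) (hB.toLp B)
  refine h.congr ?_
  filter_upwards [hA.coeFn_toLp, hB.coeFn_toLp] with ω h1 h2
  rw [h1, h2]

lemma aux_integrable_mul {a b : Ω → ℝ} (ha : MemLp a 2 μ) (hb : MemLp b 2 μ) :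
    Integrable (fun ω => a ω * b ω) μ := by
  simpa [RCLike.inner_apply] using aux_integrable_inner hb ha

end Aux

theorem stmt16 {Ω : Type*} {m0 : MeasurableSpace Ω} (μ : Measure Ω) [IsProbabilityMeasure μ]
    {d : ℕ} (𝓕 : MeasurableSpace Ω) (h𝓕 : 𝓕 ≤ m0)
    (β : ℝ) (hβ0 : 0 < β) (hβ1 : β < 1)
    (g w uprev G G' : Ω → EuclideanSpace ℝ (Fin d))
    (hg : MemLp g 2 μ) (hw : MemLp w 2 μ) (huprev : MemLp uprev 2 μ)
    (hG : MemLp G 2 μ) (hG' : MemLp G' 2 μ)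
    (huprev_meas : StronglyMeasurable[𝓕] uprev)
    (hG_meas : StronglyMeasurable[𝓕] G) (hG'_meas : StronglyMeasurable[𝓕] G')
    (hcond1 : μ[g|𝓕] =ᵐ[μ] G)
    (hcond2 : μ[g - w|𝓕] =ᵐ[μ] (G - G')) :
    (∫ ω, (β • g ω + (1 - β) • (uprev ω + g ω - w ω) - G ω) ∂μ
        = (1 - β) • ∫ ω, (uprev ω - G' ω) ∂μ) ∧
    (∫ ω, ‖β • g ω + (1 - β) • (uprev ω + g ω - w ω) - G ω‖ ^ 2 ∂μ
        ≤ (1 - β) ^ 2 * ∫ ω, ‖uprev ω - G' ω‖ ^ 2 ∂μ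
          + 2 * β ^ 2 * ∫ ω, ‖g ω - G ω‖ ^ 2 ∂μ
          + 2 * (1 - β) ^ 2 * ∫ ω, ‖g ω - w ω - G ω + G' ω‖ ^ 2 ∂μ) := by
  letI : MeasurableSpace Ω := m0
  have hβ1' : (0:ℝ) < 1 - β := by linarith
  -- decomposition
  set A : Ω → EuclideanSpace ℝ (Fin d) := fun ω => (1 - β) • (uprev ω - G' ω) with hA_def
  set Ee : Ω → EuclideanSpace ℝ (Fin d) :=
    fun ω => β • (g ω - G ω) + (1 - β) • (g ω - w ω - G ω + G' ω) with hEe_def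
  have hdecomp : ∀ ω, β • g ω + (1 - β) • (uprev ω + g ω - w ω) - G ω = A ω + Ee ω := by
    intro ω
    simp only [hA_def, hEe_def]
    module
  -- MemLp facts
  have hAmem : MemLp A 2 μ := ((huprev.sub hG').const_smul (1 - β) : )
  have hgG : MemLp (fun ω => g ω - G ω) 2 μ := hg.sub hG
  have hgw : MemLp (fun ω => g ω - w ω) 2 μ := hg.sub hw
  have hV : MemLp (fun ω => g ω - w ω - G ω + G' ω) 2 μ := ((hg.sub hw).sub hG).add hG'
  have hEmem : MemLp Ee 2 μ := (hgG.const_smul β).add (hV.const_smul (1 - β))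
  have huG' : MemLp (fun ω => uprev ω - G' ω) 2 μ := huprev.sub hG'
  -- Integrability (p = 1)
  have hAint : Integrable A μ := hAmem.integrable one_le_two
  have hEint : Integrable Ee μ := hEmem.integrable one_le_two
  have huG'int : Integrable (fun ω => uprev ω - G' ω) μ := huG'.integrable one_le_two
  have hgint : Integrable g μ := hg.integrable one_le_two
  have hGint : Integrable G μ := hG.integrable one_le_two
  have hG'int : Integrable G' μ := hG'.integrable one_le_two
  have hwint : Integrable w μ := hw.integrable one_le_two
  haveI : SigmaFinite (μ.trim h𝓕) := by infer_instance
  -- conditional expectation of the innovation is 0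
  have hcondG : μ[G|𝓕] =ᵐ[μ] G := Filter.EventuallyEq.of_eq (condExp_of_stronglyMeasurable h𝓕 hG_meas hGint)
  have hcondGG' : μ[G - G'|𝓕] =ᵐ[μ] (G - G') := Filter.EventuallyEq.of_eq
    (condExp_of_stronglyMeasurable h𝓕 (hG_meas.sub hG'_meas) (hGint.sub hG'int))
  have h1 : μ[fun ω => g ω - G ω|𝓕] =ᵐ[μ] 0 := by
    have := (condExp_sub hgint hGint (m := 𝓕)).trans
      ((hcond1.sub hcondG))
    refine this.trans ?_
    filter_upwards with ω
    simp [Pi.sub_apply]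
  have h2 : μ[fun ω => g ω - w ω - G ω + G' ω|𝓕] =ᵐ[μ] 0 := by
    have heq : (fun ω => g ω - w ω - G ω + G' ω) = (g - w) - (G - G') := by
      funext ω; simp [Pi.sub_apply]; module
    rw [heq]
    have := (condExp_sub (hgint.sub hwint) (hGint.sub hG'int) (m := 𝓕)).trans
      (hcond2.sub hcondGG')
    refine this.trans ?_
    filter_upwards with ω
    simp [Pi.sub_apply]
  have hEcond : μ[Ee|𝓕] =ᵐ[μ] 0 := by
    have heq : Ee = (β • fun ω => g ω - G ω) + ((1 - β) • fun ω => g ω - w ω - G ω + G' ω) := by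
      funext ω; simp [hEe_def, Pi.add_apply, Pi.smul_apply]
    rw [heq]
    have hadd := condExp_add (μ := μ) (m := 𝓕)
      ((hgG.const_smul β).integrable one_le_two : Integrable (β • fun ω => g ω - G ω) μ)
      ((hV.const_smul (1 - β)).integrable one_le_two :
        Integrable ((1 - β) • fun ω => g ω - w ω - G ω + G' ω) μ)
    refine hadd.trans ?_
    have hs1 := condExp_smul (μ := μ) (m := 𝓕) β (fun ω => g ω - G ω)
    have hs2 := condExp_smul (μ := μ) (m := 𝓕) (1 - β) (fun ω => g ω - w ω - G ω + G' ω)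
    filter_upwards [hs1, hs2, h1, h2] with ω e1 e2 e3 e4
    simp only [Pi.add_apply] at *
    rw [e1, e2]
    simp [e3, e4]
  have hEzero : ∫ ω, Ee ω ∂μ = 0 := by
    rw [← integral_condExp h𝓕 (f := Ee), integral_congr_ae hEcond]
    simp
  -- Part 1
  have part1 : ∫ ω, (β • g ω + (1 - β) • (uprev ω + g ω - w ω) - G ω) ∂μ
      = (1 - β) • ∫ ω, (uprev ω - G' ω) ∂μ := by
    rw [integral_congr_ae (Filter.Eventually.of_forall hdecomp),
      integral_add hAint hEint, hEzero, add_zero, hA_def, integral_smul]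
  refine ⟨part1, ?_⟩
  -- orthogonality : ∫ ⟪A, Ee⟫ = 0
  have horth : ∫ ω, (inner ℝ (A ω) (Ee ω) : ℝ) ∂μ = 0 := by
    have hinner : ∀ ω, (inner ℝ (A ω) (Ee ω) : ℝ) = ∑ i : Fin d, A ω i * Ee ω i := by
      intro ω
      simp [PiLp.inner_apply, RCLike.inner_apply, mul_comm]
    rw [integral_congr_ae (Filter.Eventually.of_forall hinner)]
    have hAi : ∀ i : Fin d, MemLp (fun ω => A ω i) 2 μ := fun i =>
      (EuclideanSpace.proj i : EuclideanSpace ℝ (Fin d) →L[ℝ] ℝ).comp_memLp' hAmem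
    have hEi : ∀ i : Fin d, MemLp (fun ω => Ee ω i) 2 μ := fun i =>
      (EuclideanSpace.proj i : EuclideanSpace ℝ (Fin d) →L[ℝ] ℝ).comp_memLp' hEmem
    have hint : ∀ i : Fin d, Integrable (fun ω => A ω i * Ee ω i) μ := fun i =>
      aux_integrable_mul (hAi i) (hEi i)
    rw [integral_finset_sum _ (fun i _ => hint i)]
    refine Finset.sum_eq_zero fun i _ => ?_
    -- condexp of coordinate of Ee is 0
    have hEicond : (0 : Ω → ℝ) =ᵐ[μ] μ[fun ω => Ee ω i|𝓕] := by
      refine ae_eq_condExp_of_forall_setIntegral_eq h𝓕 ((hEi i).integrable one_le_two)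
        (fun s _ _ => (integrable_zero Ω ℝ μ).integrableOn) (fun s hs _ => ?_)
        ⟨0, stronglyMeasurable_zero, Filter.EventuallyEq.rfl⟩
      have hset : ∫ ω in s, Ee ω ∂μ = 0 := by
        have h1 : ∫ ω in s, (μ[Ee|𝓕]) ω ∂μ = ∫ ω in s, Ee ω ∂μ :=
          setIntegral_condExp h𝓕 hEint hs
        have h2 : ∫ ω in s, (μ[Ee|𝓕]) ω ∂μ
            = ∫ ω in s, (0 : Ω → EuclideanSpace ℝ (Fin d)) ω ∂μ :=
          integral_congr_ae (ae_restrict_of_ae hEcond)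
        rw [← h1, h2]
        simp
      have hproj := (EuclideanSpace.proj i : EuclideanSpace ℝ (Fin d) →L[ℝ] ℝ).integral_comp_comm
        (hEint.integrableOn (s := s))
      have hkey : ∫ x in s, Ee x i ∂μ
          = (EuclideanSpace.proj i : EuclideanSpace ℝ (Fin d) →L[ℝ] ℝ) (∫ x in s, Ee x ∂μ) :=
        hproj
      simp only [Pi.zero_apply, integral_zero]
      rw [hkey, hset]
      simp
    have hpull : μ[(fun ω => A ω i) * (fun ω => Ee ω i)|𝓕]
        =ᵐ[μ] (fun ω => A ω i) * μ[fun ω => Ee ω i|𝓕] := by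
      refine condExp_mul_of_stronglyMeasurable_left ?_ ?_ ((hEi i).integrable one_le_two)
      · have : StronglyMeasurable[𝓕] A := (huprev_meas.sub hG'_meas).const_smul (1 - β)
        exact ((EuclideanSpace.proj i : EuclideanSpace ℝ (Fin d) →L[ℝ] ℝ).continuous.comp_stronglyMeasurable this : )
      · exact hint i
    have : ∫ ω, A ω i * Ee ω i ∂μ = ∫ ω, (0:ℝ) ∂μ := by
      rw [show (fun ω => A ω i * Ee ω i) = (fun ω => A ω i) * (fun ω => Ee ω i) from rfl]
      rw [← integral_condExp h𝓕 (f := (fun ω => A ω i) * (fun ω => Ee ω i))]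
      refine integral_congr_ae ?_
      filter_upwards [hpull, hEicond.symm] with ω e1 e2
      simp only [Pi.mul_apply] at *
      rw [e1, e2]
      simp
    simpa using this
  -- integrability of squared norms
  have hAsq : Integrable (fun ω => ‖A ω‖ ^ 2) μ :=
    (memLp_two_iff_integrable_sq_norm hAmem.aestronglyMeasurable).mp hAmem
  have hEsq : Integrable (fun ω => ‖Ee ω‖ ^ 2) μ :=
    (memLp_two_iff_integrable_sq_norm hEmem.aestronglyMeasurable).mp hEmem
  have hgGsq : Integrable (fun ω => ‖g ω - G ω‖ ^ 2) μ :=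
    (memLp_two_iff_integrable_sq_norm hgG.aestronglyMeasurable).mp hgG
  have hVsq : Integrable (fun ω => ‖g ω - w ω - G ω + G' ω‖ ^ 2) μ :=
    (memLp_two_iff_integrable_sq_norm hV.aestronglyMeasurable).mp hV
  have hinnerint : Integrable (fun ω => (inner ℝ (A ω) (Ee ω) : ℝ)) μ :=
    aux_integrable_inner hAmem hEmem
  -- expand the square
  have hsq : ∫ ω, ‖β • g ω + (1 - β) • (uprev ω + g ω - w ω) - G ω‖ ^ 2 ∂μ
      = ∫ ω, ‖A ω‖ ^ 2 ∂μ + ∫ ω, ‖Ee ω‖ ^ 2 ∂μ := by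
    have hpt : ∀ ω, ‖β • g ω + (1 - β) • (uprev ω + g ω - w ω) - G ω‖ ^ 2
        = ‖A ω‖ ^ 2 + 2 * (inner ℝ (A ω) (Ee ω) : ℝ) + ‖Ee ω‖ ^ 2 := by
      intro ω; rw [hdecomp ω]; exact norm_add_sq_real _ _
    have hI2 : Integrable (fun ω => 2 * (inner ℝ (A ω) (Ee ω) : ℝ)) μ := hinnerint.const_mul 2
    have hI12 : Integrable (fun ω => ‖A ω‖ ^ 2 + 2 * (inner ℝ (A ω) (Ee ω) : ℝ)) μ := hAsq.add hI2
    rw [integral_congr_ae (Filter.Eventually.of_forall hpt),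
      integral_add hI12 hEsq, integral_add hAsq hI2, integral_const_mul, horth]
    ring
  rw [hsq]
  -- ∫ ‖A‖² = (1-β)² ∫ ‖uprev - G'‖²
  have hAnorm : ∫ ω, ‖A ω‖ ^ 2 ∂μ = (1 - β) ^ 2 * ∫ ω, ‖uprev ω - G' ω‖ ^ 2 ∂μ := by
    rw [← integral_const_mul]
    refine integral_congr_ae (Filter.Eventually.of_forall fun ω => ?_)
    show ‖(1 - β) • (uprev ω - G' ω)‖ ^ 2 = _
    rw [norm_smul]
    simp [abs_of_pos hβ1', mul_pow]
  -- ∫ ‖Ee‖² ≤ 2β² ∫ ‖g - G‖² + 2(1-β)² ∫ ‖g - w - G + G'‖²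
  have hEbound : ∫ ω, ‖Ee ω‖ ^ 2 ∂μ
      ≤ 2 * β ^ 2 * ∫ ω, ‖g ω - G ω‖ ^ 2 ∂μ
        + 2 * (1 - β) ^ 2 * ∫ ω, ‖g ω - w ω - G ω + G' ω‖ ^ 2 ∂μ := by
    have hpt : ∀ ω, ‖Ee ω‖ ^ 2
        ≤ 2 * β ^ 2 * ‖g ω - G ω‖ ^ 2 + 2 * (1 - β) ^ 2 * ‖g ω - w ω - G ω + G' ω‖ ^ 2 := by
      intro ω
      have h1 : ‖Ee ω‖ ≤ β * ‖g ω - G ω‖ + (1 - β) * ‖g ω - w ω - G ω + G' ω‖ := by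
        calc ‖Ee ω‖ ≤ ‖β • (g ω - G ω)‖ + ‖(1 - β) • (g ω - w ω - G ω + G' ω)‖ :=
              norm_add_le _ _
          _ = β * ‖g ω - G ω‖ + (1 - β) * ‖g ω - w ω - G ω + G' ω‖ := by
              rw [norm_smul, norm_smul, Real.norm_eq_abs, Real.norm_eq_abs,
                abs_of_pos hβ0, abs_of_pos hβ1']
      nlinarith [norm_nonneg (Ee ω), norm_nonneg (g ω - G ω),
        norm_nonneg (g ω - w ω - G ω + G' ω), sq_nonneg (β * ‖g ω - G ω‖ -
        (1 - β) * ‖g ω - w ω - G ω + G' ω‖)]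
    calc ∫ ω, ‖Ee ω‖ ^ 2 ∂μ
        ≤ ∫ ω, (2 * β ^ 2 * ‖g ω - G ω‖ ^ 2
            + 2 * (1 - β) ^ 2 * ‖g ω - w ω - G ω + G' ω‖ ^ 2) ∂μ :=
          integral_mono hEsq ((hgGsq.const_mul _).add (hVsq.const_mul _)) hpt
      _ = 2 * β ^ 2 * ∫ ω, ‖g ω - G ω‖ ^ 2 ∂μ
            + 2 * (1 - β) ^ 2 * ∫ ω, ‖g ω - w ω - G ω + G' ω‖ ^ 2 ∂μ := by
          rw [integral_add (hgGsq.const_mul _) (hVsq.const_mul _),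
            integral_const_mul, integral_const_mul]
  rw [hAnorm]
  linarith
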